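/- arXiv:2508.18685 — 8 statements merged into one kernel-verified Lean document; each statement's English description precedes it below -/
import Mathlib

section
/- Let d > 1 and let D ⊆ S^{d-1} be a finite set satisfying ∑_{x∈D} ⟨y,x⟩² = (|D|/d)⟨y,y⟩, ∑_{x∈D} ⟨y,x⟩⁴ = (3|D|/(d(d+2)))⟨y,y⟩², and ∑_{x∈D} ⟨y,x⟩⁶ = (15|D|/(d(d+2)(d+4)))⟨y,y⟩³ for all y ∈ ℝ^d (the moment conditions of a spherical 7-design). Then there is no vector α ∈ ℝ^d such that ⟨α,x⟩ ∈ {0,±1} for all x ∈ D; i.e., D is not of minimal type. -/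
open scoped RealInnerProductSpace

theorem stmt1 (d : ℕ) (hd : 1 < d) (D : Finset (EuclideanSpace ℝ (Fin d)))
    (hD : D.Nonempty)
    (hunit : ∀ x ∈ D, ‖x‖ = 1)
    (h2 : ∀ y : EuclideanSpace ℝ (Fin d),
      ∑ x ∈ D, ⟪y, x⟫ ^ 2 = ((D.card : ℝ) / d) * ⟪y, y⟫)
    (h4 : ∀ y : EuclideanSpace ℝ (Fin d),
      ∑ x ∈ D, ⟪y, x⟫ ^ 4 = (3 * (D.card : ℝ) / (d * (d + 2))) * ⟪y, y⟫ ^ 2)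
    (h6 : ∀ y : EuclideanSpace ℝ (Fin d),
      ∑ x ∈ D, ⟪y, x⟫ ^ 6
        = (15 * (D.card : ℝ) / (d * (d + 2) * (d + 4))) * ⟪y, y⟫ ^ 3) :
    ¬ ∃ α : EuclideanSpace ℝ (Fin d), α ≠ 0 ∧
        ∀ x ∈ D, ⟪α, x⟫ = 0 ∨ ⟪α, x⟫ = 1 ∨ ⟪α, x⟫ = -1 := by
  rintro ⟨α, hα, hmin⟩
  set t : ℝ := ⟪α, α⟫ with ht
  have hnorm : 0 < ‖α‖ := norm_pos_iff.mpr hα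
  have htpos : 0 < t := by rw [ht, real_inner_self_eq_norm_sq]; positivity
  have hn : 0 < (D.card : ℝ) := by exact_mod_cast Finset.card_pos.mpr hD
  have hdr : (2 : ℝ) ≤ (d : ℝ) := by exact_mod_cast hd
  have h24 : ∑ x ∈ D, ⟪α, x⟫ ^ 2 = ∑ x ∈ D, ⟪α, x⟫ ^ 4 := by
    refine Finset.sum_congr rfl fun x hx => ?_
    rcases hmin x hx with h | h | h <;> rw [h] <;> norm_num
  have h46 : ∑ x ∈ D, ⟪α, x⟫ ^ 4 = ∑ x ∈ D, ⟪α, x⟫ ^ 6 := by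
    refine Finset.sum_congr rfl fun x hx => ?_
    rcases hmin x hx with h | h | h <;> rw [h] <;> norm_num
  have e1 : ((D.card : ℝ) / d) * t = (3 * (D.card : ℝ) / (d * (d + 2))) * t ^ 2 := by
    rw [← h2 α, ← h4 α] at *; exact h24
  have e2 : (3 * (D.card : ℝ) / (d * (d + 2))) * t ^ 2
      = (15 * (D.card : ℝ) / (d * (d + 2) * (d + 4))) * t ^ 3 := by
    rw [← h4 α, ← h6 α] at *; exact h46
  have hd0 : (0 : ℝ) < (d : ℝ) := by linarith
  have hd2 : (0 : ℝ) < (d : ℝ) + 2 := by linarith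
  have hd4 : (0 : ℝ) < (d : ℝ) + 4 := by linarith
  have e1' : ((d : ℝ) + 2) = 3 * t := by
    field_simp at e1
    nlinarith [mul_pos (mul_pos hn htpos) hd0]
  have e2' : ((d : ℝ) + 4) = 5 * t := by
    field_simp at e2
    nlinarith [mul_pos (mul_pos (mul_pos hn (mul_pos htpos htpos)) hd0) hd2]
  nlinarith
end

section
/- The set of positive integers m such that m is odd, m ≢ 1 (mod 3), m+1 ≢ 0 (mod 8), and m(m+1) is square-free, is infinite. -/
set_option maxRecDepth 2000

lemma card_le_of_const_mod (T : Finset ℕ) (a S q : ℕ)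
    (hT : T ⊆ Finset.Ico a (a + S))
    (hmod : ∀ s ∈ T, ∀ t ∈ T, s % q = t % q) : T.card ≤ S / q + 1 := by
  rcases T.eq_empty_or_nonempty with rfl | hne
  · simp
  set s₀ := T.min' hne with hs₀
  have hs₀m := T.min'_mem hne
  have key : ∀ s ∈ T, q * ((s - s₀) / q) = s - s₀ ∧ s₀ ≤ s ∧ s < s₀ + S := by
    intro s hs
    have hle : s₀ ≤ s := T.min'_le s hs
    have hd : q ∣ s - s₀ := (Nat.modEq_iff_dvd' hle).mp (hmod s₀ hs₀m s hs)
    have h1 := Finset.mem_Ico.mp (hT hs)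
    have h2 := Finset.mem_Ico.mp (hT hs₀m)
    exact ⟨Nat.mul_div_cancel' hd, hle, by omega⟩
  have hinj : Set.InjOn (fun s => (s - s₀) / q) T := by
    intro s hs t ht h
    obtain ⟨e1, l1, _⟩ := key s hs
    obtain ⟨e2, l2, _⟩ := key t ht
    simp only at h
    rw [h] at e1
    omega
  have hsub : T.image (fun s => (s - s₀) / q) ⊆ Finset.range (S / q + 1) := by
    intro x hx
    simp only [Finset.mem_image] at hx
    obtain ⟨s, hs, rfl⟩ := hx
    obtain ⟨_, l, u⟩ := key s hs
    simp only [Finset.mem_range]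
    have h1 : (s - s₀) / q ≤ (S - 1) / q := Nat.div_le_div_right (by omega)
    have h2 : (S - 1) / q ≤ S / q := Nat.div_le_div_right (by omega)
    omega
  calc T.card = (T.image _).card := (Finset.card_image_of_injOn hinj).symm
    _ ≤ _ := Finset.card_le_card hsub
    _ = S / q + 1 := Finset.card_range _

lemma sum_div_sq_le (S : ℕ) : ∀ K : ℕ, 4 ≤ K →
    (∑ k ∈ Finset.Icc 5 K, ((S / (k * k) : ℕ) : ℚ)) ≤ (S : ℚ) / 4 - (S : ℚ) / K := by
  intro K
  induction K with
  | zero => omega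
  | succ n ih =>
    intro hn
    rcases Nat.lt_or_ge n 4 with h4 | h4
    · interval_cases n
      · omega
      · omega
      · omega
      · simp
    · have hI := ih h4
      rw [Finset.sum_Icc_succ_top (by omega)]
      have hc : ((S / ((n+1) * (n+1)) : ℕ) : ℚ) ≤ (S : ℚ) / (((n:ℚ)+1) * ((n:ℚ)+1)) := by
        have := Nat.cast_div_le (α := ℚ) (m := S) (n := (n+1)*(n+1))
        push_cast at this ⊢
        convert this using 2
      have hn0 : (0:ℚ) < (n:ℚ) := by exact_mod_cast (by omega : 0 < n)
      have hkey : (S : ℚ) / (((n:ℚ)+1) * ((n:ℚ)+1)) ≤ (S : ℚ) / n - (S : ℚ) / ((n:ℚ)+1) := by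
        rw [div_sub_div _ _ (ne_of_gt hn0) (by positivity)]
        rw [div_le_div_iff₀ (by positivity) (by positivity)]
        have hS : (0:ℚ) ≤ (S:ℚ) := by positivity
        nlinarith
      push_cast
      push_cast at hI hkey hc
      linarith

lemma coprime72 {p : ℕ} (hp : p.Prime) (h5 : 5 ≤ p) : Nat.Coprime 72 (p * p) := by
  have hnd : ¬ p ∣ 72 := by
    intro h
    have h89 : p ∣ 8 * 9 := by norm_num; exact h
    rcases (Nat.Prime.dvd_mul hp).mp h89 with h8 | h9
    · have : p ∣ 2 := hp.dvd_of_dvd_pow (show p ∣ 2^3 by norm_num; exact h8)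
      have := Nat.le_of_dvd (by norm_num) this
      omega
    · have : p ∣ 3 := hp.dvd_of_dvd_pow (show p ∣ 3^2 by norm_num; exact h9)
      have := Nat.le_of_dvd (by norm_num) this
      omega
  have h1 : Nat.Coprime p 72 := (Nat.Prime.coprime_iff_not_dvd hp).mpr hnd
  exact (h1.symm).mul_right h1.symm

lemma coprime_consec (n : ℕ) : Nat.Coprime n (n + 1) := by
  unfold Nat.Coprime
  have h1 := Nat.gcd_dvd_left n (n+1)
  have h2 := Nat.gcd_dvd_right n (n+1)
  have := Nat.dvd_sub h2 h1
  simpa using Nat.eq_one_of_self_dvd _ (by simpa using this)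

lemma main_exists (N : ℕ) : ∃ m, N < m ∧ 0 < m ∧ Odd m ∧ m % 3 ≠ 1 ∧ (m + 1) % 8 ≠ 0 ∧
    Squarefree (m * (m + 1)) := by
  classical
  set S := N + 10000 with hS
  set K := 12 * Nat.sqrt S + 11 with hK
  set P : Finset ℕ := (Finset.Icc 5 K).filter Nat.Prime with hP
  set f : ℕ → Finset ℕ := fun p =>
    (Finset.Ico S (S + S)).filter (fun s => p * p ∣ 72 * s + 21 ∨ p * p ∣ 72 * s + 22) with hf
  set Bad : Finset ℕ :=
    (Finset.Ico S (S + S)).filter (fun s => ¬ Squarefree ((72 * s + 21) * (72 * s + 22))) with hBad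
  -- Step 1: Bad ⊆ P.biUnion f
  have hsub : Bad ⊆ P.biUnion f := by
    intro s hs
    rw [hBad, Finset.mem_filter] at hs
    obtain ⟨hIco, hnsq⟩ := hs
    rw [Nat.squarefree_iff_prime_squarefree] at hnsq
    push_neg at hnsq
    obtain ⟨p, hp', hdvd⟩ := hnsq
    -- split the divisibility
    have hco : Nat.Coprime (72 * s + 21) (72 * s + 22) := coprime_consec _
    have hsplit : p * p ∣ 72 * s + 21 ∨ p * p ∣ 72 * s + 22 := by
      rcases (Nat.Prime.dvd_mul hp').mp (dvd_trans (Dvd.intro p rfl) hdvd) with h1 | h2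
      · left
        have hnd : ¬ p ∣ 72 * s + 22 := fun h => Nat.Prime.one_lt hp' |>.ne'
          (Nat.eq_one_of_dvd_coprimes hco h1 h)
        have hc1 : Nat.Coprime p (72 * s + 22) := (Nat.Prime.coprime_iff_not_dvd hp').mpr hnd
        have : Nat.Coprime (p * p) (72 * s + 22) := Nat.Coprime.mul hc1 hc1
        exact this.dvd_of_dvd_mul_right hdvd
      · right
        have hnd : ¬ p ∣ 72 * s + 21 := fun h => Nat.Prime.one_lt hp' |>.ne'
          (Nat.eq_one_of_dvd_coprimes hco h h2)
        have hc1 : Nat.Coprime p (72 * s + 21) := (Nat.Prime.coprime_iff_not_dvd hp').mpr hnd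
        have : Nat.Coprime (p * p) (72 * s + 21) := Nat.Coprime.mul hc1 hc1
        exact this.dvd_of_dvd_mul_left hdvd
    -- p ≥ 5
    have hp2 := hp'.two_le
    have hp4 : p ≠ 4 := fun h => by rw [h] at hp'; norm_num at hp'
    have hp5 : 5 ≤ p := by
      rcases hsplit with h | h <;>
      · by_contra hlt
        interval_cases p <;> omega
    -- p ≤ K
    have hpK : p ≤ K := by
      have hub : p * p ≤ 144 * S := by
        rcases hsplit with h | h
        · have := Nat.le_of_dvd (by omega) h
          have := (Finset.mem_Ico.mp hIco).2
          omega
        · have := Nat.le_of_dvd (by omega) h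
          have := (Finset.mem_Ico.mp hIco).2
          omega
      have hsq : S < (Nat.sqrt S + 1) * (Nat.sqrt S + 1) := by
        have := Nat.lt_succ_sqrt' S
        rw [pow_two] at this
        exact this
      nlinarith
    rw [Finset.mem_biUnion]
    exact ⟨p, by rw [hP, Finset.mem_filter, Finset.mem_Icc]; exact ⟨⟨hp5, hpK⟩, hp'⟩,
      by rw [hf]; simp only [Finset.mem_filter]; exact ⟨hIco, hsplit⟩⟩
  -- Step 2: card of each f p
  have hcard : ∀ p ∈ P, (f p).card ≤ 2 * (S / (p * p)) + 2 := by
    intro p hpP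
    rw [hP, Finset.mem_filter, Finset.mem_Icc] at hpP
    obtain ⟨⟨hp5, _⟩, hp'⟩ := hpP
    have hco72 := coprime72 hp' hp5
    have step : ∀ c : ℕ, ((Finset.Ico S (S + S)).filter (fun s => p * p ∣ 72 * s + c)).card
        ≤ S / (p * p) + 1 := by
      intro c
      apply card_le_of_const_mod _ S S (p * p) (Finset.filter_subset _ _)
      intro s hs t ht
      rw [Finset.mem_filter] at hs ht
      obtain ⟨_, hds⟩ := hs
      obtain ⟨_, hdt⟩ := ht
      rcases le_total s t with hle | hle
      · have h1 : p * p ∣ 72 * t + c - (72 * s + c) := Nat.dvd_sub hdt hds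
        have h2 : 72 * t + c - (72 * s + c) = 72 * (t - s) := by omega
        rw [h2] at h1
        have h3 : p * p ∣ t - s := (Nat.Coprime.dvd_of_dvd_mul_left hco72.symm h1)
        exact (Nat.modEq_iff_dvd' hle).mpr h3
      · have h1 : p * p ∣ 72 * s + c - (72 * t + c) := Nat.dvd_sub hds hdt
        have h2 : 72 * s + c - (72 * t + c) = 72 * (s - t) := by omega
        rw [h2] at h1
        have h3 : p * p ∣ s - t := (Nat.Coprime.dvd_of_dvd_mul_left hco72.symm h1)
        exact ((Nat.modEq_iff_dvd' hle).mpr h3).symm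
    have hfsub : f p ⊆ ((Finset.Ico S (S + S)).filter (fun s => p * p ∣ 72 * s + 21)) ∪
        ((Finset.Ico S (S + S)).filter (fun s => p * p ∣ 72 * s + 22)) := by
      rw [hf]
      intro s hs
      rw [Finset.mem_filter] at hs
      rw [Finset.mem_union, Finset.mem_filter, Finset.mem_filter]
      exact Or.elim hs.2 (fun h => Or.inl ⟨hs.1, h⟩) (fun h => Or.inr ⟨hs.1, h⟩)
    calc (f p).card ≤ _ := Finset.card_le_card hfsub
      _ ≤ _ := Finset.card_union_le _ _
      _ ≤ 2 * (S / (p * p)) + 2 := by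
          have := step 21
          have := step 22
          omega
  -- Step 3: total bound
  have hbound : Bad.card < S := by
    have h1 : Bad.card ≤ ∑ p ∈ P, (f p).card :=
      le_trans (Finset.card_le_card hsub) (Finset.card_biUnion_le)
    have h2 : ∑ p ∈ P, (f p).card ≤ ∑ p ∈ P, (2 * (S / (p * p)) + 2) :=
      Finset.sum_le_sum hcard
    have h3 : (∑ p ∈ P, ((S / (p * p) : ℕ) : ℚ)) ≤ (S : ℚ) / 4 := by
      have hsubP : P ⊆ Finset.Icc 5 K := Finset.filter_subset _ _
      have := Finset.sum_le_sum_of_subset_of_nonneg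
        (f := fun k => ((S / (k * k) : ℕ) : ℚ)) hsubP (fun i _ _ => by positivity)
      refine le_trans this (le_trans (sum_div_sq_le S K (by omega)) ?_)
      have : (0:ℚ) ≤ (S : ℚ) / K := by positivity
      linarith
    have hPcard : P.card ≤ K := by
      have hPc : P ⊆ Finset.Icc 5 K := Finset.filter_subset _ _
      have := Finset.card_le_card hPc
      rw [Nat.card_Icc] at this
      omega
    -- combine in ℚ
    have hq : (Bad.card : ℚ) ≤ (S : ℚ) / 2 + 2 * K := by
      have e1 : ((∑ p ∈ P, (2 * (S / (p * p)) + 2) : ℕ) : ℚ)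
          = 2 * (∑ p ∈ P, ((S / (p * p) : ℕ) : ℚ)) + 2 * P.card := by
        push_cast
        rw [Finset.sum_add_distrib, Finset.mul_sum]
        simp [Finset.sum_const, mul_comm]
      have c1 : (Bad.card : ℚ) ≤ ((∑ p ∈ P, (2 * (S / (p * p)) + 2) : ℕ) : ℚ) := by
        exact_mod_cast le_trans h1 h2
      have c2 : (2 : ℚ) * P.card ≤ 2 * K := by
        have : (P.card : ℚ) ≤ K := by exact_mod_cast hPcard
        linarith
      rw [e1] at c1
      linarith
    have hsqrt : 100 ≤ Nat.sqrt S := by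
      rw [Nat.le_sqrt]
      omega
    have hsqS : (Nat.sqrt S : ℚ) * 100 ≤ (S : ℚ) := by
      have : Nat.sqrt S * 100 ≤ S := by
        have h1 : Nat.sqrt S * Nat.sqrt S ≤ S := by
          have := Nat.sqrt_le' S; rw [pow_two] at this; exact this
        calc Nat.sqrt S * 100 ≤ Nat.sqrt S * Nat.sqrt S := Nat.mul_le_mul_left _ hsqrt
          _ ≤ S := h1
      exact_mod_cast this
    have hKQ : (K : ℚ) = 12 * (Nat.sqrt S : ℚ) + 11 := by
      rw [hK]; push_cast; ring
    have hSQ : (10000 : ℚ) ≤ (S : ℚ) := by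
      have : (10000 : ℕ) ≤ S := by omega
      exact_mod_cast this
    have : (Bad.card : ℚ) < (S : ℚ) := by
      rw [hKQ] at hq
      linarith
    exact_mod_cast this
  -- Step 4: extract a good s
  have hex : ∃ s ∈ Finset.Ico S (S + S), Squarefree ((72 * s + 21) * (72 * s + 22)) := by
    by_contra hc
    push_neg at hc
    have heq : Bad = Finset.Ico S (S + S) := by
      rw [hBad, Finset.filter_eq_self]
      exact hc
    rw [heq, Nat.card_Ico] at hbound
    omega
  obtain ⟨s, hsmem, hsq⟩ := hex
  have hsS := (Finset.mem_Ico.mp hsmem).1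
  refine ⟨72 * s + 21, by omega, by omega, ⟨36 * s + 10, by ring⟩, by omega, by omega, ?_⟩
  have : 72 * s + 21 + 1 = 72 * s + 22 := by ring
  rw [this]
  exact hsq

theorem stmt4 :
    {m : ℕ | 0 < m ∧ Odd m ∧ m % 3 ≠ 1 ∧ (m + 1) % 8 ≠ 0 ∧
      Squarefree (m * (m + 1))}.Infinite := by
  apply Set.infinite_of_forall_exists_gt
  intro a
  obtain ⟨m, h1, h2⟩ := main_exists a
  exact ⟨m, h2, h1⟩
end

section
/- Let X ⊆ S^{d-1} be a finite set with |X| = n > d. Then the coherence μ(X) := max over distinct pairs x ≠ y in X of |⟨x,y⟩| satisfies μ(X) ≥ √((n−d)/(d(n−1))) (the Welch bound). -/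
open scoped RealInnerProductSpace
open Finset

theorem stmt5 (d : ℕ) (hd : 0 < d) (X : Finset (EuclideanSpace ℝ (Fin d)))
    (hunit : ∀ x ∈ X, ‖x‖ = 1) (hcard : d < X.card) :
    ∃ x ∈ X, ∃ y ∈ X, x ≠ y ∧
      Real.sqrt (((X.card : ℝ) - d) / (d * ((X.card : ℝ) - 1))) ≤ |⟪x, y⟫| := by
  classical
  set n : ℕ := X.card with hn
  have hinner : ∀ x ∈ X, ⟪x, x⟫ = 1 := by
    intro x hx
    rw [real_inner_self_eq_norm_sq, hunit x hx]; norm_num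
  have hip : ∀ x y : EuclideanSpace ℝ (Fin d), ⟪x, y⟫ = ∑ i, x i * y i := by
    intro x y
    simp [PiLp.inner_apply, RCLike.inner_apply, mul_comm]
  set a : Fin d → Fin d → ℝ := fun i j => ∑ x ∈ X, x i * x j with ha
  -- trace
  have htr : ∑ i, a i i = (n : ℝ) := by
    rw [Finset.sum_comm]
    have : ∀ x ∈ X, ∑ i, x i * x i = (1:ℝ) := by
      intro x hx; rw [← hip x x, hinner x hx]
    rw [Finset.sum_congr rfl this]
    simp
    exact hn.symm
  -- S as double sum over indices
  have hS : ∑ x ∈ X, ∑ y ∈ X, ⟪x, y⟫ ^ 2 = ∑ i, ∑ j, (a i j) ^ 2 := by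
    have e1 : ∀ x y : EuclideanSpace ℝ (Fin d),
        ⟪x, y⟫ ^ 2 = ∑ i, ∑ j, (x i * x j) * (y i * y j) := by
      intro x y
      rw [hip, sq, Finset.sum_mul_sum]
      apply Finset.sum_congr rfl; intro i _
      apply Finset.sum_congr rfl; intro j _
      ring
    simp_rw [e1]
    have e2 : ∀ i j, (a i j) ^ 2 = ∑ x ∈ X, ∑ y ∈ X, (x i * x j) * (y i * y j) := by
      intro i j; rw [ha]; simp only [sq, Finset.sum_mul_sum]
    simp_rw [e2]
    calc ∑ x ∈ X, ∑ y ∈ X, ∑ i, ∑ j, (x i * x j) * (y i * y j)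
        = ∑ x ∈ X, ∑ i, ∑ y ∈ X, ∑ j, (x i * x j) * (y i * y j) :=
          Finset.sum_congr rfl fun x _ => Finset.sum_comm
      _ = ∑ i, ∑ x ∈ X, ∑ y ∈ X, ∑ j, (x i * x j) * (y i * y j) :=
          Finset.sum_comm
      _ = ∑ i, ∑ x ∈ X, ∑ j, ∑ y ∈ X, (x i * x j) * (y i * y j) :=
          Finset.sum_congr rfl fun i _ => Finset.sum_congr rfl fun x _ =>
            Finset.sum_comm
      _ = ∑ i, ∑ j, ∑ x ∈ X, ∑ y ∈ X, (x i * x j) * (y i * y j) :=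
          Finset.sum_congr rfl fun i _ => Finset.sum_comm
  -- Cauchy-Schwarz lower bound
  have hcs : (n : ℝ) ^ 2 ≤ (d : ℝ) * ∑ i, ∑ j, (a i j) ^ 2 := by
    have h1 : ((n : ℝ)) ^ 2 ≤ (d : ℝ) * ∑ i, (a i i) ^ 2 := by
      have := sq_sum_le_card_mul_sum_sq (s := (Finset.univ : Finset (Fin d)))
        (f := fun i => a i i)
      rw [htr] at this
      simpa using this
    refine h1.trans ?_
    apply mul_le_mul_of_nonneg_left ?_ (by positivity)
    apply Finset.sum_le_sum
    intro i _
    exact Finset.single_le_sum (f := fun j => (a i j)^2) (fun j _ => sq_nonneg _)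
      (Finset.mem_univ i)
  -- split into diagonal and off-diagonal
  have hsplit : ∑ x ∈ X, ∑ y ∈ X, ⟪x, y⟫ ^ 2
      = (∑ p ∈ X.offDiag, ⟪p.1, p.2⟫ ^ 2) + (n : ℝ) := by
    rw [← Finset.sum_product']
    rw [← Finset.diag_union_offDiag X,
      Finset.sum_union (Finset.disjoint_diag_offDiag X), add_comm]
    congr 1
    rw [Finset.sum_diag]
    rw [Finset.sum_congr rfl (fun x hx => by rw [hinner x hx])]
    simp
    exact hn.symm
  -- choose maximizing pair
  have hne : X.offDiag.Nonempty := by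
    have h2 : 1 < X.card := lt_of_le_of_lt hd hcard
    obtain ⟨x, hx, y, hy, hxy⟩ := Finset.one_lt_card.mp h2
    exact ⟨(x, y), Finset.mem_offDiag.mpr ⟨hx, hy, hxy⟩⟩
  obtain ⟨p, hp, hmax⟩ := X.offDiag.exists_max_image (fun p => ⟪p.1, p.2⟫ ^ 2) hne
  obtain ⟨hp1, hp2, hp12⟩ := Finset.mem_offDiag.mp hp
  refine ⟨p.1, hp1, p.2, hp2, hp12, ?_⟩
  set M : ℝ := ⟪p.1, p.2⟫ ^ 2 with hM
  have hsum_le : ∑ q ∈ X.offDiag, ⟪q.1, q.2⟫ ^ 2 ≤ (X.offDiag.card : ℝ) * M := by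
    have := Finset.sum_le_card_nsmul X.offDiag (fun q => ⟪q.1, q.2⟫ ^ 2) M
      (fun q hq => hmax q hq)
    simpa [nsmul_eq_mul] using this
  have hcardOff : (X.offDiag.card : ℝ) = (n : ℝ) * (n : ℝ) - (n : ℝ) := by
    rw [Finset.offDiag_card]
    have hle : X.card ≤ X.card * X.card := Nat.le_mul_of_pos_left _ (by omega)
    push_cast [Nat.cast_sub hle]
    ring
  have hnR : (1:ℝ) ≤ (d:ℝ) := by exact_mod_cast hd
  have hdn : (d:ℝ) + 1 ≤ (n:ℝ) := by exact_mod_cast hcard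
  have key : ((n : ℝ) - d) / ((d : ℝ) * ((n : ℝ) - 1)) ≤ M := by
    rw [div_le_iff₀ (by nlinarith)]
    have h1 : (n : ℝ) ^ 2 ≤ (d : ℝ) * ((∑ p ∈ X.offDiag, ⟪p.1, p.2⟫ ^ 2) + n) := by
      rw [← hsplit, hS]; exact hcs
    have h2 : (n : ℝ) ^ 2 ≤ (d : ℝ) * (((n:ℝ) * n - n) * M + n) := by
      refine h1.trans (mul_le_mul_of_nonneg_left ?_ (by positivity))
      rw [← hcardOff]
      exact add_le_add hsum_le le_rfl
    have hnpos : (0:ℝ) < n := by nlinarith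
    nlinarith [sq_nonneg ((n:ℝ) - d)]
  calc Real.sqrt (((n : ℝ) - d) / ((d:ℝ) * ((n : ℝ) - 1)))
      ≤ Real.sqrt M := Real.sqrt_le_sqrt key
    _ = |⟪p.1, p.2⟫| := by rw [hM, Real.sqrt_sq_eq_abs]
end

section
/- Let X ⊆ S^{d-1} be a finite set, α = e₁ the first standard basis vector with ±α ∉ X, and B = {⟨α,x⟩ : x ∈ X} = {β₁,…,β_s} with each |βᵢ| < 1. For each i define the derived code D_{βᵢ} = {ξ ∈ S^{d-2} : (βᵢ, √(1−βᵢ²)·ξ) ∈ X}. Then for all i, j, every inner product between a point of D_{βᵢ} and a point of D_{βⱼ} (as points of S^{d-2}) lies in { (γ − βᵢβⱼ)/√((1−βᵢ²)(1−βⱼ²)) : γ ∈ A(X) ∪ {1} }, where A(X) is the set of inner products between distinct points of X. -/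
open scoped RealInnerProductSpace

noncomputable def liftPt {d : ℕ} (β : ℝ) (ξ : EuclideanSpace ℝ (Fin d)) :
    EuclideanSpace ℝ (Fin (d + 1)) :=
  (WithLp.toLp 2 (Fin.cons β fun i => Real.sqrt (1 - β ^ 2) * ξ i : Fin (d + 1) → ℝ) :
    EuclideanSpace ℝ (Fin (d + 1)))

lemma liftPt_inner {d : ℕ} (β β' : ℝ) (ξ η : EuclideanSpace ℝ (Fin d)) :
    ⟪liftPt β ξ, liftPt β' η⟫ =
      β * β' + Real.sqrt (1 - β ^ 2) * Real.sqrt (1 - β' ^ 2) * ⟪ξ, η⟫ := by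
  simp only [EuclideanSpace.inner_eq_star_dotProduct]
  simp [liftPt, dotProduct, Fin.sum_univ_succ, Finset.mul_sum]
  rw [Finset.sum_congr rfl fun i _ =>
    show Real.sqrt (1 - β' ^ 2) * η i * (Real.sqrt (1 - β ^ 2) * ξ i)
      = Real.sqrt (1 - β ^ 2) * Real.sqrt (1 - β' ^ 2) * (η i * ξ i) by ring,
    ← Finset.mul_sum]
  ring

theorem stmt7 (d : ℕ) (X : Set (EuclideanSpace ℝ (Fin (d + 1)))) (hfin : X.Finite)
    (hunit : ∀ x ∈ X, ‖x‖ = 1)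
    (α : EuclideanSpace ℝ (Fin (d + 1))) (hαdef : α = EuclideanSpace.single 0 1)
    (hα : α ∉ X) (hα' : -α ∉ X)
    (β β' : ℝ) (hβ : |β| < 1) (hβ' : |β'| < 1)
    (ξ η : EuclideanSpace ℝ (Fin d)) (hξn : ‖ξ‖ = 1) (hηn : ‖η‖ = 1)
    (hξ : liftPt β ξ ∈ X) (hη : liftPt β' η ∈ X) :
    ∃ γ : ℝ, ((∃ x ∈ X, ∃ y ∈ X, x ≠ y ∧ ⟪x, y⟫ = γ) ∨ γ = 1) ∧
      ⟪ξ, η⟫ = (γ - β * β') / Real.sqrt ((1 - β ^ 2) * (1 - β' ^ 2)) := by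
  have h1 : (0:ℝ) < 1 - β ^ 2 := by nlinarith [abs_nonneg β, sq_abs β]
  have h2 : (0:ℝ) < 1 - β' ^ 2 := by nlinarith [abs_nonneg β', sq_abs β']
  have hs : Real.sqrt ((1 - β ^ 2) * (1 - β' ^ 2)) =
      Real.sqrt (1 - β ^ 2) * Real.sqrt (1 - β' ^ 2) := Real.sqrt_mul h1.le _
  have hspos : (0:ℝ) < Real.sqrt (1 - β ^ 2) * Real.sqrt (1 - β' ^ 2) :=
    mul_pos (Real.sqrt_pos.2 h1) (Real.sqrt_pos.2 h2)
  refine ⟨⟪liftPt β ξ, liftPt β' η⟫, ?_, ?_⟩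
  · by_cases heq : liftPt β ξ = liftPt β' η
    · right
      rw [heq, real_inner_self_eq_norm_sq, hunit _ hη]
      norm_num
    · exact Or.inl ⟨_, hξ, _, hη, heq, rfl⟩
  · rw [liftPt_inner, hs]
    field_simp
    ring
end

section
/- Let X be a spherical t-design in S^{d-1} with α = e₁, ±α ∉ X, and B = {⟨α,x⟩ : x ∈ X} having exactly s elements, all in (−1,1). Then for each β ∈ B, the derived code D_β = {ξ ∈ S^{d-2} : (β, √(1−β²)·ξ) ∈ X} is a spherical (t+1−s)-design in S^{d-2}. -/
open scoped RealInnerProductSpace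

open MvPolynomial

lemma sphAux_sum_sq {n : ℕ} (v : EuclideanSpace ℝ (Fin n)) :
    ∑ i, v i ^ 2 = ‖v‖ ^ 2 := by
  rw [EuclideanSpace.norm_eq, Real.sq_sqrt (by positivity)]
  simp [Real.norm_eq_abs, sq_abs]

lemma sphAux_norm {n : ℕ} (v : EuclideanSpace ℝ (Fin n)) :
    ‖v‖ = Real.sqrt (∑ i, v i ^ 2) := by
  rw [sphAux_sum_sq, Real.sqrt_sq (norm_nonneg _)]

def sphAux_tail {d : ℕ} (x : EuclideanSpace ℝ (Fin (d + 1))) : EuclideanSpace ℝ (Fin d) :=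
  WithLp.toLp 2 (fun i => x i.succ)

noncomputable def sphAux_liftFun {d : ℕ}
    (g : EuclideanSpace ℝ (Fin d) ≃ₗᵢ[ℝ] EuclideanSpace ℝ (Fin d))
    (x : EuclideanSpace ℝ (Fin (d + 1))) : EuclideanSpace ℝ (Fin (d + 1)) :=
  WithLp.toLp 2 (Fin.cons (x 0) (fun i => g (sphAux_tail x) i) : Fin (d + 1) → ℝ)

lemma sphAux_liftFun_zero {d : ℕ} (g : EuclideanSpace ℝ (Fin d) ≃ₗᵢ[ℝ] EuclideanSpace ℝ (Fin d))
    (x : EuclideanSpace ℝ (Fin (d + 1))) : sphAux_liftFun g x 0 = x 0 := rfl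

lemma sphAux_liftFun_succ {d : ℕ} (g : EuclideanSpace ℝ (Fin d) ≃ₗᵢ[ℝ] EuclideanSpace ℝ (Fin d))
    (x : EuclideanSpace ℝ (Fin (d + 1))) (i : Fin d) :
    sphAux_liftFun g x i.succ = g (sphAux_tail x) i := by
  simp [sphAux_liftFun]

lemma sphAux_tail_add {d : ℕ} (x y : EuclideanSpace ℝ (Fin (d + 1))) :
    sphAux_tail (x + y) = sphAux_tail x + sphAux_tail y := by
  ext i; rfl

lemma sphAux_tail_smul {d : ℕ} (a : ℝ) (x : EuclideanSpace ℝ (Fin (d + 1))) :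
    sphAux_tail (a • x) = a • sphAux_tail x := by
  ext i; rfl

lemma sphAux_tail_lift {d : ℕ} (g : EuclideanSpace ℝ (Fin d) ≃ₗᵢ[ℝ] EuclideanSpace ℝ (Fin d))
    (x : EuclideanSpace ℝ (Fin (d + 1))) :
    sphAux_tail (sphAux_liftFun g x) = g (sphAux_tail x) := by
  ext i
  exact sphAux_liftFun_succ g x i

noncomputable def sphAux_lift {d : ℕ}
    (g : EuclideanSpace ℝ (Fin d) ≃ₗᵢ[ℝ] EuclideanSpace ℝ (Fin d)) :
    EuclideanSpace ℝ (Fin (d + 1)) ≃ₗᵢ[ℝ] EuclideanSpace ℝ (Fin (d + 1)) where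
  toLinearEquiv :=
  { toFun := sphAux_liftFun g
    invFun := sphAux_liftFun g.symm
    map_add' := by
      intro x y
      ext i
      refine Fin.cases ?_ (fun j => ?_) i
      · show sphAux_liftFun g (x + y) 0 = sphAux_liftFun g x 0 + sphAux_liftFun g y 0
        rfl
      · show sphAux_liftFun g (x + y) j.succ = sphAux_liftFun g x j.succ + sphAux_liftFun g y j.succ
        simp only [sphAux_liftFun_succ, sphAux_tail_add, map_add]
        rfl
    map_smul' := by
      intro a x
      ext i
      refine Fin.cases ?_ (fun j => ?_) i
      · show sphAux_liftFun g (a • x) 0 = a * sphAux_liftFun g x 0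
        rfl
      · show sphAux_liftFun g (a • x) j.succ = a * sphAux_liftFun g x j.succ
        simp only [sphAux_liftFun_succ, sphAux_tail_smul, map_smul]
        rfl
    left_inv := by
      intro x
      ext i
      refine Fin.cases ?_ (fun j => ?_) i
      · rfl
      · show sphAux_liftFun g.symm (sphAux_liftFun g x) j.succ = x j.succ
        rw [sphAux_liftFun_succ, sphAux_tail_lift, g.symm_apply_apply]
        rfl
    right_inv := by
      intro x
      ext i
      refine Fin.cases ?_ (fun j => ?_) i
      · rfl
      · show sphAux_liftFun g (sphAux_liftFun g.symm x) j.succ = x j.succ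
        rw [sphAux_liftFun_succ, sphAux_tail_lift, g.apply_symm_apply]
        rfl }
  norm_map' := by
    intro x
    show ‖sphAux_liftFun g x‖ = ‖x‖
    rw [sphAux_norm, sphAux_norm x, Fin.sum_univ_succ, Fin.sum_univ_succ]
    rw [sphAux_liftFun_zero]
    congr 2
    have : ∑ i, g (sphAux_tail x) i ^ 2 = ∑ i, sphAux_tail x i ^ 2 := by
        rw [sphAux_sum_sq, sphAux_sum_sq, g.norm_map]
    calc ∑ i : Fin d, sphAux_liftFun g x i.succ ^ 2
          = ∑ i, g (sphAux_tail x) i ^ 2 := by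
            exact Finset.sum_congr rfl fun i _ => by rw [sphAux_liftFun_succ]
        _ = ∑ i, sphAux_tail x i ^ 2 := this
        _ = ∑ i : Fin d, x i.succ ^ 2 := rfl

lemma sphAux_lift_apply {d : ℕ} (g : EuclideanSpace ℝ (Fin d) ≃ₗᵢ[ℝ] EuclideanSpace ℝ (Fin d))
    (x : EuclideanSpace ℝ (Fin (d + 1))) : sphAux_lift g x = sphAux_liftFun g x := rfl

lemma sphAux_eval_scale {n : ℕ} (a : ℝ) (f : MvPolynomial (Fin n) ℝ) (v : Fin n → ℝ) :
    eval v (aeval (fun i => C a * X i : Fin n → MvPolynomial (Fin n) ℝ) f)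
      = eval (fun i => a * v i) f := by
  rw [aeval_def, eval₂_comp_left (eval v)]
  simp only [Function.comp_def, map_mul, eval_C, eval_X]
  have h : ((eval v : MvPolynomial (Fin n) ℝ →+* ℝ).comp
      (algebraMap ℝ (MvPolynomial (Fin n) ℝ))) = RingHom.id ℝ := by
    ext r
    simp [MvPolynomial.algebraMap_eq]
  rw [h, eval₂_id]

lemma sphAux_totalDegree_scale_le {n : ℕ} (a : ℝ) (f : MvPolynomial (Fin n) ℝ) :
    (aeval (fun i => C a * X i : Fin n → MvPolynomial (Fin n) ℝ) f).totalDegree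
      ≤ f.totalDegree := by
  conv_lhs => rw [f.as_sum]
  rw [map_sum]
  refine MvPolynomial.totalDegree_finsetSum_le fun m hm => ?_
  rw [aeval_monomial]
  refine (MvPolynomial.totalDegree_mul _ _).trans ?_
  have h1 : (algebraMap ℝ (MvPolynomial (Fin n) ℝ) (coeff m f)).totalDegree = 0 := by
    rw [MvPolynomial.algebraMap_eq, totalDegree_C]
  rw [h1, zero_add]
  refine le_trans ?_ (MvPolynomial.le_totalDegree hm)
  rw [Finsupp.prod]
  refine (MvPolynomial.totalDegree_finset_prod _ _).trans ?_
  have h2 : ∀ i, ((C a * X i : MvPolynomial (Fin n) ℝ) ^ m i).totalDegree ≤ m i := by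
    intro i
    refine (MvPolynomial.totalDegree_pow _ _).trans ?_
    have : (C a * X i : MvPolynomial (Fin n) ℝ).totalDegree ≤ 1 := by
      refine (MvPolynomial.totalDegree_mul _ _).trans ?_
      simp [MvPolynomial.totalDegree_C, MvPolynomial.totalDegree_X]
    calc m i * (C a * X i : MvPolynomial (Fin n) ℝ).totalDegree ≤ m i * 1 :=
          Nat.mul_le_mul_left _ this
      _ = m i := Nat.mul_one _
  calc ∑ i ∈ m.support, ((C a * X i : MvPolynomial (Fin n) ℝ) ^ m i).totalDegree
      ≤ ∑ i ∈ m.support, m i := Finset.sum_le_sum fun i _ => h2 i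
    _ = m.sum fun _ e => e := rfl

lemma sphAux_eq_C_of_totalDegree_zero {n : ℕ} (f : MvPolynomial (Fin n) ℝ)
    (h : f.totalDegree = 0) : f = C (coeff 0 f) := by
  have h' := (MvPolynomial.totalDegree_eq_zero_iff (Fin n) f).mp h
  ext m
  by_cases hm : m = 0
  · subst hm; simp
  · have hns : m ∉ f.support := by
      intro hmem
      obtain ⟨x, hx⟩ : ∃ x, m x ≠ 0 := by
        by_contra hall
        push_neg at hall
        exact hm (Finsupp.ext hall)
      exact hx (h' m hmem x)
    rw [MvPolynomial.notMem_support_iff.mp hns, MvPolynomial.coeff_C, if_neg (Ne.symm hm)]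

/-- A finite nonempty set of unit vectors is a spherical `t`-design if, for every
polynomial of total degree at most `t`, the sum of its values over the set is invariant
under the action of the orthogonal group. -/
def IsSphericalDesign {m : ℕ} (t : ℕ) (Y : Finset (EuclideanSpace ℝ (Fin m))) : Prop :=
  Y.Nonempty ∧ (∀ y ∈ Y, ‖y‖ = 1) ∧
    ∀ f : MvPolynomial (Fin m) ℝ, f.totalDegree ≤ t →
      ∀ g : EuclideanSpace ℝ (Fin m) ≃ₗᵢ[ℝ] EuclideanSpace ℝ (Fin m),
        ∑ y ∈ Y, MvPolynomial.eval (fun i => g y i) f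
          = ∑ y ∈ Y, MvPolynomial.eval (fun i => y i) f

theorem stmt8 (d t : ℕ) [DecidableEq (EuclideanSpace ℝ (Fin d))]
    (X : Finset (EuclideanSpace ℝ (Fin (d + 1))))
    (hdesign : IsSphericalDesign t X)
    (α : EuclideanSpace ℝ (Fin (d + 1))) (hαdef : α = EuclideanSpace.single 0 1)
    (hα : α ∉ X) (hα' : -α ∉ X)
    (hopen : ∀ x ∈ X, |⟪α, x⟫| < 1)
    (s : ℕ) (hs : (X.image fun x => ⟪α, x⟫).card = s) :
    ∀ β ∈ X.image fun x => ⟪α, x⟫,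
      IsSphericalDesign (t + 1 - s)
        ((X.filter fun x => ⟪α, x⟫ = β).image
          fun x => (WithLp.toLp 2 (fun i : Fin d => x i.succ / Real.sqrt (1 - β ^ 2)) :
            EuclideanSpace ℝ (Fin d))) := by
  obtain ⟨hXne, hXnorm, hdes⟩ := hdesign
  intro β hβ
  have hinner : ∀ x : EuclideanSpace ℝ (Fin (d + 1)), ⟪α, x⟫ = x 0 := by
    intro x
    rw [hαdef]
    simpa using EuclideanSpace.inner_single_left (𝕜 := ℝ) 0 1 x
  set c := Real.sqrt (1 - β ^ 2) with hc_def
  obtain ⟨x₀, hx₀X, hx₀β⟩ := Finset.mem_image.mp hβ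
  have hβlt : |β| < 1 := hx₀β ▸ hopen x₀ hx₀X
  have h1β : 0 < 1 - β ^ 2 := by nlinarith [sq_abs β, abs_nonneg β]
  have hc : 0 < c := Real.sqrt_pos.mpr h1β
  have hc2 : c ^ 2 = 1 - β ^ 2 := Real.sq_sqrt h1β.le
  set B := X.image (fun x => ⟪α, x⟫) with hB
  set D := X.filter (fun x => ⟪α, x⟫ = β) with hD
  set m : EuclideanSpace ℝ (Fin (d + 1)) → EuclideanSpace ℝ (Fin d) :=
    fun x => (WithLp.toLp 2 (fun i : Fin d => x i.succ / c) : EuclideanSpace ℝ (Fin d)) with hm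
  have hD0 : ∀ x ∈ D, x 0 = β := by
    intro x hx
    rw [← hinner x]
    exact (Finset.mem_filter.mp hx).2
  have hDX : ∀ x ∈ D, x ∈ X := fun x hx => (Finset.mem_filter.mp hx).1
  have hx₀D : x₀ ∈ D := Finset.mem_filter.mpr ⟨hx₀X, hx₀β⟩
  have htail : ∀ x ∈ D, sphAux_tail x = c • m x := by
    intro x hx
    ext j
    show x j.succ = c * (x j.succ / c)
    field_simp
  have hinj : ∀ x ∈ D, ∀ y ∈ D, m x = m y → x = y := by
    intro x hx y hy hxy
    ext i
    refine Fin.cases ?_ (fun j => ?_) i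
    · rw [hD0 x hx, hD0 y hy]
    · have h1 : x j.succ / c = y j.succ / c := congrArg (fun v : EuclideanSpace ℝ (Fin d) => v j) hxy
      field_simp at h1
      exact h1
  have himg : ∀ h : EuclideanSpace ℝ (Fin d) → ℝ,
      ∑ ξ ∈ D.image m, h ξ = ∑ x ∈ D, h (m x) :=
    fun h => Finset.sum_image hinj
  refine ⟨⟨m x₀, Finset.mem_image_of_mem m hx₀D⟩, ?_, ?_⟩
  · intro ξ hξ
    obtain ⟨x, hxD, rfl⟩ := Finset.mem_image.mp hξ
    have hx1 : ‖x‖ = 1 := hXnorm x (hDX x hxD)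
    have hsum : ∑ i : Fin d, x i.succ ^ 2 = 1 - β ^ 2 := by
      have h1 : ∑ i : Fin (d + 1), x i ^ 2 = 1 := by
        rw [sphAux_sum_sq, hx1, one_pow]
      rw [Fin.sum_univ_succ, hD0 x hxD] at h1
      linarith
    rw [sphAux_norm]
    have : ∑ i : Fin d, m x i ^ 2 = 1 := by
      have : ∀ i : Fin d, m x i ^ 2 = x i.succ ^ 2 / c ^ 2 := by
        intro i
        show (x i.succ / c) ^ 2 = x i.succ ^ 2 / c ^ 2
        ring
      rw [Finset.sum_congr rfl fun i _ => this i, ← Finset.sum_div, hsum, hc2,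
        div_self h1β.ne']
    rw [this, Real.sqrt_one]
  · intro f hf g
    by_cases hf0 : f.totalDegree = 0
    · rw [sphAux_eq_C_of_totalDegree_zero f hf0]
      simp
    have hfd : 1 ≤ f.totalDegree := Nat.one_le_iff_ne_zero.mpr hf0
    have hs1 : 1 ≤ s := by
      rw [← hs]
      exact Finset.card_pos.mpr ⟨β, hβ⟩
    set φ := aeval (fun i => C c⁻¹ * MvPolynomial.X i : Fin d → MvPolynomial (Fin d) ℝ) f with hφ
    have hφdeg : φ.totalDegree ≤ f.totalDegree := sphAux_totalDegree_scale_le c⁻¹ f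
    set F := (rename Fin.succ φ) * ∏ b ∈ B.erase β, (MvPolynomial.X 0 - MvPolynomial.C b)
      with hF
    have hFdeg : F.totalDegree ≤ t := by
      refine (MvPolynomial.totalDegree_mul _ _).trans ?_
      have h1 : (rename Fin.succ φ).totalDegree ≤ t + 1 - s :=
        (MvPolynomial.totalDegree_rename_le _ _).trans (hφdeg.trans hf)
      have h2 : (∏ b ∈ B.erase β, (MvPolynomial.X 0 - MvPolynomial.C b :
          MvPolynomial (Fin (d + 1)) ℝ)).totalDegree ≤ s - 1 := by
        refine (MvPolynomial.totalDegree_finset_prod _ _).trans ?_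
        have h3 : ∀ b : ℝ, (MvPolynomial.X 0 - MvPolynomial.C b :
            MvPolynomial (Fin (d + 1)) ℝ).totalDegree ≤ 1 :=
          fun b => (MvPolynomial.totalDegree_sub _ _).trans
            (by simp [MvPolynomial.totalDegree_X])
        calc ∑ b ∈ B.erase β, (MvPolynomial.X 0 - MvPolynomial.C b :
              MvPolynomial (Fin (d + 1)) ℝ).totalDegree
            ≤ ∑ _b ∈ B.erase β, 1 := Finset.sum_le_sum fun b _ => h3 b
          _ = (B.erase β).card := by simp
          _ = s - 1 := by rw [Finset.card_erase_of_mem hβ, hs]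
      have hfle : f.totalDegree ≤ t + 1 - s := hf
      omega
    have hFeval : ∀ v : Fin (d + 1) → ℝ,
        eval v F = eval (fun i => c⁻¹ * v i.succ) f * ∏ b ∈ B.erase β, (v 0 - b) := by
      intro v
      rw [hF, eval_mul, eval_rename, hφ, sphAux_eval_scale]
      simp only [eval_prod, map_sub, eval_X, eval_C, Function.comp_def]
    have key : ∀ w : EuclideanSpace ℝ (Fin (d + 1)) → (Fin (d + 1) → ℝ),
        (∀ x, w x 0 = x 0) →
        ∑ y ∈ X, eval (w y) F
          = (∑ x ∈ D, eval (fun i => c⁻¹ * w x i.succ) f) * ∏ b ∈ B.erase β, (β - b) := by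
      intro w hw0
      rw [← Finset.sum_fiberwise_of_maps_to (g := fun x => ⟪α, x⟫)
        (fun x hx => Finset.mem_image_of_mem _ hx) (fun y => eval (w y) F)]
      rw [Finset.sum_eq_single_of_mem β hβ ?_]
      · rw [Finset.sum_mul]
        refine Finset.sum_congr rfl fun x hx => ?_
        rw [hFeval, hw0, hD0 x hx]
      · intro b hbB hbβ
        refine Finset.sum_eq_zero fun x hx => ?_
        have hx0 : x 0 = b := by
          rw [← hinner x]
          exact (Finset.mem_filter.mp hx).2
        rw [hFeval]
        have hfac : w x 0 - b = 0 := by rw [hw0, hx0, sub_self]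
        rw [Finset.prod_eq_zero (Finset.mem_erase.mpr ⟨hbβ, hbB⟩) hfac, mul_zero]
    have hP : (∏ b ∈ B.erase β, (β - b)) ≠ 0 := by
      rw [Finset.prod_ne_zero_iff]
      intro b hb
      exact sub_ne_zero.mpr (Ne.symm (Finset.mem_erase.mp hb).1)
    have hdesF := hdes F hFdeg (sphAux_lift g)
    rw [key (fun y => fun i => sphAux_lift g y i) (fun x => rfl),
      key (fun y => fun i => y i) (fun x => rfl)] at hdesF
    have hsum := mul_right_cancel₀ hP hdesF
    have hL : ∀ x ∈ D, (fun i => c⁻¹ * sphAux_lift g x i.succ) = (fun i => g (m x) i) := by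
      intro x hx
      funext i
      rw [sphAux_lift_apply, sphAux_liftFun_succ, htail x hx, map_smul]
      show c⁻¹ * (c • g (m x)) i = g (m x) i
      rw [PiLp.smul_apply, smul_eq_mul]
      exact inv_mul_cancel_left₀ hc.ne' _
    have hR : ∀ x : EuclideanSpace ℝ (Fin (d + 1)),
        (fun i => c⁻¹ * x i.succ) = (fun i : Fin d => m x i) := by
      intro x
      funext i
      rw [hm]
      show c⁻¹ * x i.succ = x i.succ / c
      rw [div_eq_inv_mul]
    calc ∑ ξ ∈ D.image m, eval (fun i => g ξ i) f
        = ∑ x ∈ D, eval (fun i => g (m x) i) f := himg (fun ξ => eval (fun i => g ξ i) f)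
      _ = ∑ x ∈ D, eval (fun i => c⁻¹ * sphAux_lift g x i.succ) f :=
          Finset.sum_congr rfl fun x hx => by rw [hL x hx]
      _ = ∑ x ∈ D, eval (fun i => c⁻¹ * x i.succ) f := hsum
      _ = ∑ x ∈ D, eval (fun i : Fin d => m x i) f :=
          Finset.sum_congr rfl fun x _ => by rw [hR x]
      _ = ∑ ξ ∈ D.image m, eval (fun i => ξ i) f :=
          (himg (fun ξ => eval (fun i => ξ i) f)).symm
end

section
/- Let Y = {y₁,…,y_n} ⊆ S^{l-1} be a tight frame (∑ yᵢyᵢᵀ = (n/l)·I) with exactly two distinct inner products a and b among distinct elements, where a² ≠ b². Define a graph G on {1,…,n} by joining i and j when ⟨yᵢ,yⱼ⟩ = a. Then G is regular, and its valency equals n_a = ((n/l) − 1 − (n−1)b²)/(a² − b²). -/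
open scoped RealInnerProductSpace

theorem stmt15 (l : ℕ) (hl : 0 < l) [DecidableEq (EuclideanSpace ℝ (Fin l))]
    (Y : Finset (EuclideanSpace ℝ (Fin l)))
    (hunit : ∀ y ∈ Y, ‖y‖ = 1)
    (htf : ∀ v : EuclideanSpace ℝ (Fin l),
      ∑ y ∈ Y, ⟪v, y⟫ ^ 2 = ((Y.card : ℝ) / l) * ⟪v, v⟫)
    (a b : ℝ) (hab : a ^ 2 ≠ b ^ 2)
    (hang : ∀ x ∈ Y, ∀ y ∈ Y, x ≠ y → ⟪x, y⟫ = a ∨ ⟪x, y⟫ = b)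
    (haocc : ∃ x ∈ Y, ∃ y ∈ Y, x ≠ y ∧ ⟪x, y⟫ = a)
    (hbocc : ∃ x ∈ Y, ∃ y ∈ Y, x ≠ y ∧ ⟪x, y⟫ = b) :
    ∀ x ∈ Y, ((Y.filter fun z => z ≠ x ∧ ⟪x, z⟫ = a).card : ℝ)
      = ((Y.card : ℝ) / l - 1 - ((Y.card : ℝ) - 1) * b ^ 2) / (a ^ 2 - b ^ 2) := by
  intro x hx
  have hxx : ⟪x, x⟫ = (1 : ℝ) := by
    have h := hunit x hx
    rw [real_inner_self_eq_norm_sq, h, one_pow]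
  have hsum : ∑ y ∈ Y, ⟪x, y⟫ ^ 2 = (Y.card : ℝ) / l := by
    rw [htf x, hxx, mul_one]
  have habne : a ≠ b := fun h => hab (by rw [h])
  set S := Y.filter fun z => z ≠ x ∧ ⟪x, z⟫ = a with hS
  set T := Y.filter fun z => z ≠ x ∧ ⟪x, z⟫ = b with hT
  have hdisj : Disjoint S T := by
    rw [Finset.disjoint_left]
    rintro z hzS hzT
    rw [hS, Finset.mem_filter] at hzS
    rw [hT, Finset.mem_filter] at hzT
    exact habne (hzS.2.2 ▸ hzT.2.2)
  have hunion : S ∪ T = Y.erase x := by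
    ext z
    simp only [hS, hT, Finset.mem_union, Finset.mem_filter, Finset.mem_erase]
    constructor
    · rintro (⟨hz, hne, _⟩ | ⟨hz, hne, _⟩) <;> exact ⟨hne, hz⟩
    · rintro ⟨hne, hz⟩
      rcases hang x hx z hz (Ne.symm hne) with h | h
      · exact Or.inl ⟨hz, hne, h⟩
      · exact Or.inr ⟨hz, hne, h⟩
  have hcard : S.card + T.card = Y.card - 1 := by
    rw [← Finset.card_union_of_disjoint hdisj, hunion, Finset.card_erase_of_mem hx]
  have hsplit : ∑ y ∈ Y, ⟪x, y⟫ ^ 2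
      = 1 + ((S.card : ℝ) * a ^ 2 + (T.card : ℝ) * b ^ 2) := by
    rw [← Finset.add_sum_erase Y _ hx, hxx, one_pow, ← hunion,
      Finset.sum_union hdisj]
    have hSa : ∀ z ∈ S, ⟪x, z⟫ ^ 2 = a ^ 2 := by
      intro z hz
      rw [hS, Finset.mem_filter] at hz
      rw [hz.2.2]
    have hTb : ∀ z ∈ T, ⟪x, z⟫ ^ 2 = b ^ 2 := by
      intro z hz
      rw [hT, Finset.mem_filter] at hz
      rw [hz.2.2]
    rw [Finset.sum_congr rfl hSa, Finset.sum_congr rfl hTb,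
      Finset.sum_const, Finset.sum_const, nsmul_eq_mul, nsmul_eq_mul]
  have hn1 : (1 : ℝ) ≤ (Y.card : ℝ) := by
    exact_mod_cast Finset.card_pos.mpr ⟨x, hx⟩
  have hTcard : (T.card : ℝ) = (Y.card : ℝ) - 1 - S.card := by
    have h1 : 1 ≤ Y.card := Finset.card_pos.mpr ⟨x, hx⟩
    have h2 : ((S.card + T.card : ℕ) : ℝ) = ((Y.card - 1 : ℕ) : ℝ) := by
      rw [hcard]
    push_cast [h1] at h2
    linarith
  have key : (S.card : ℝ) * a ^ 2 + ((Y.card : ℝ) - 1 - S.card) * b ^ 2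
      = (Y.card : ℝ) / l - 1 := by
    rw [← hTcard]
    have := hsplit.symm.trans hsum
    linarith
  have hne : a ^ 2 - b ^ 2 ≠ 0 := sub_ne_zero.mpr hab
  rw [eq_div_iff hne]
  linear_combination key
end

section
/- Suppose X₁, X₂, X₃ are finite subsets of S^{d-2} (d > 4) with X₃ = −X₁, X₂ = −X₂, |X₁| = |X₃| = (d+2)n/(3d), |X₂| = 4(d−1)n/(3d), and angle sets A(X₁), A(X₃) ⊆ {−3/(d−1), ((d+2)α−3)/(d−1), (−(d+2)α−3)/(d−1)}, A(X₂) ⊆ {−1, 0, ±α}, A(X₁,X₂), A(X₂,X₃) ⊆ {0, ±√((d+2)/(d−1))·α}, A(X₁,X₃) ⊆ {−1, 3/(d−1), ((d+2)α+3)/(d−1), (−(d+2)α+3)/(d−1)}, where α = √((3n − d(d+2))/((d+2)(n−d))). Define D = X̃₁ ∪ X̃₂ ∪ X̃₃ ⊆ S^{d-1}, where X̃₁ = {(√(3/(d+2)), √((d−1)/(d+2))·x) : x ∈ X₁}, X̃₂ = {(0,x) : x ∈ X₂}, X̃₃ = −X̃₁. Then D is antipodal (D = −D), |D| = 2n, and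 the set of inner products between distinct points of D is contained in {−1, 0, ±α}. -/
open scoped RealInnerProductSpace

set_option maxHeartbeats 1600000 in
theorem stmt16 (e d n : ℕ) (hde : d = e + 1) (hd4 : 4 < d)
    [DecidableEq (EuclideanSpace ℝ (Fin e))]
    [DecidableEq (EuclideanSpace ℝ (Fin (e + 1)))]
    (X₁ X₂ X₃ : Finset (EuclideanSpace ℝ (Fin e)))
    (hunit₁ : ∀ x ∈ X₁, ‖x‖ = 1) (hunit₂ : ∀ x ∈ X₂, ‖x‖ = 1)
    (hunit₃ : ∀ x ∈ X₃, ‖x‖ = 1)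
    (hX₃ : X₃ = X₁.image fun x => -x)
    (hX₂ : X₂ = X₂.image fun x => -x)
    (hcard₁ : 3 * d * X₁.card = (d + 2) * n)
    (hcard₃ : X₃.card = X₁.card)
    (hcard₂ : 3 * d * X₂.card = 4 * (d - 1) * n)
    (α : ℝ)
    (hα : α = Real.sqrt ((3 * (n : ℝ) - d * ((d : ℝ) + 2)) / (((d : ℝ) + 2) * ((n : ℝ) - d))))
    (hA₁ : ∀ x ∈ X₁, ∀ y ∈ X₁, x ≠ y → ⟪x, y⟫ ∈
      ({-3 / ((d : ℝ) - 1), (((d : ℝ) + 2) * α - 3) / ((d : ℝ) - 1),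
        (-(((d : ℝ) + 2) * α) - 3) / ((d : ℝ) - 1)} : Set ℝ))
    (hA₃ : ∀ x ∈ X₃, ∀ y ∈ X₃, x ≠ y → ⟪x, y⟫ ∈
      ({-3 / ((d : ℝ) - 1), (((d : ℝ) + 2) * α - 3) / ((d : ℝ) - 1),
        (-(((d : ℝ) + 2) * α) - 3) / ((d : ℝ) - 1)} : Set ℝ))
    (hA₂ : ∀ x ∈ X₂, ∀ y ∈ X₂, x ≠ y → ⟪x, y⟫ ∈ ({-1, 0, α, -α} : Set ℝ))
    (hA₁₂ : ∀ x ∈ X₁, ∀ y ∈ X₂, x ≠ y → ⟪x, y⟫ ∈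
      ({0, Real.sqrt (((d : ℝ) + 2) / ((d : ℝ) - 1)) * α,
        -(Real.sqrt (((d : ℝ) + 2) / ((d : ℝ) - 1)) * α)} : Set ℝ))
    (hA₂₃ : ∀ x ∈ X₂, ∀ y ∈ X₃, x ≠ y → ⟪x, y⟫ ∈
      ({0, Real.sqrt (((d : ℝ) + 2) / ((d : ℝ) - 1)) * α,
        -(Real.sqrt (((d : ℝ) + 2) / ((d : ℝ) - 1)) * α)} : Set ℝ))
    (hA₁₃ : ∀ x ∈ X₁, ∀ y ∈ X₃, x ≠ y → ⟪x, y⟫ ∈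
      ({-1, 3 / ((d : ℝ) - 1), (((d : ℝ) + 2) * α + 3) / ((d : ℝ) - 1),
        (-(((d : ℝ) + 2) * α) + 3) / ((d : ℝ) - 1)} : Set ℝ))
    (D : Finset (EuclideanSpace ℝ (Fin (e + 1))))
    (hD : D = (X₁.image fun x =>
        (WithLp.toLp 2 (Fin.cons (Real.sqrt (3 / ((d : ℝ) + 2)))
          (fun i => Real.sqrt (((d : ℝ) - 1) / ((d : ℝ) + 2)) * x i) : Fin (e + 1) → ℝ) :
          EuclideanSpace ℝ (Fin (e + 1))))
      ∪ (X₂.image fun x =>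
        (WithLp.toLp 2 (Fin.cons (0 : ℝ) (fun i => x i) : Fin (e + 1) → ℝ) : EuclideanSpace ℝ (Fin (e + 1))))
      ∪ ((X₁.image fun x =>
        (WithLp.toLp 2 (Fin.cons (Real.sqrt (3 / ((d : ℝ) + 2)))
          (fun i => Real.sqrt (((d : ℝ) - 1) / ((d : ℝ) + 2)) * x i) : Fin (e + 1) → ℝ) :
          EuclideanSpace ℝ (Fin (e + 1)))).image fun v => -v)) :
    (∀ p ∈ D, -p ∈ D) ∧ D.card = 2 * n ∧
      ∀ p ∈ D, ∀ q ∈ D, p ≠ q → ⟪p, q⟫ ∈ ({-1, 0, α, -α} : Set ℝ) := by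
  have hd5 : (5:ℝ) ≤ (d:ℝ) := by exact_mod_cast hd4
  have hne1 : ((d:ℝ) - 1) ≠ 0 := by linarith
  have hne2 : ((d:ℝ) + 2) ≠ 0 := by linarith
  set c1 := Real.sqrt (3 / ((d:ℝ) + 2)) with hc1
  set c2 := Real.sqrt (((d:ℝ) - 1) / ((d:ℝ) + 2)) with hc2
  set s := Real.sqrt (((d:ℝ) + 2) / ((d:ℝ) - 1)) with hsdef
  have hc1sq : c1 * c1 = 3 / ((d:ℝ) + 2) := Real.mul_self_sqrt (by positivity)
  have hc2sq : c2 * c2 = ((d:ℝ) - 1) / ((d:ℝ) + 2) :=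
    Real.mul_self_sqrt (div_nonneg (by linarith) (by linarith))
  have hc1pos : 0 < c1 := Real.sqrt_pos.2 (by positivity)
  have hc2pos : 0 < c2 := Real.sqrt_pos.2 (div_pos (by linarith) (by linarith))
  have hcs : c2 * s = 1 := by
    rw [hc2, hsdef, ← Real.sqrt_mul (div_nonneg (by linarith) (by linarith)),
      show ((d:ℝ) - 1) / ((d:ℝ) + 2) * (((d:ℝ) + 2) / ((d:ℝ) - 1)) = 1 from by
        field_simp, Real.sqrt_one]
  have hα0 : 0 ≤ α := hα ▸ Real.sqrt_nonneg _
  have hs0 : 0 ≤ s := Real.sqrt_nonneg _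
  set F : EuclideanSpace ℝ (Fin e) → EuclideanSpace ℝ (Fin (e + 1)) :=
    fun x => (WithLp.toLp 2 (Fin.cons c1 (fun i => c2 * x i) : Fin (e + 1) → ℝ) : EuclideanSpace ℝ (Fin (e + 1))) with hF
  set G : EuclideanSpace ℝ (Fin e) → EuclideanSpace ℝ (Fin (e + 1)) :=
    fun x => (WithLp.toLp 2 (Fin.cons (0:ℝ) (fun i => x i) : Fin (e + 1) → ℝ) : EuclideanSpace ℝ (Fin (e + 1))) with hG
  -- inner product helpers
  have hic : ∀ (a b : ℝ) (v w : Fin e → ℝ),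
      @inner ℝ (EuclideanSpace ℝ (Fin (e + 1))) _ (WithLp.toLp 2 (Fin.cons a v : Fin (e + 1) → ℝ)) (WithLp.toLp 2 (Fin.cons b w : Fin (e + 1) → ℝ))
        = a * b + ∑ i, v i * w i := by
    intro a b v w
    simp [PiLp.inner_apply, RCLike.inner_apply, Fin.sum_univ_succ, mul_comm]
  have hsum : ∀ (r t : ℝ) (x y : EuclideanSpace ℝ (Fin e)),
      (∑ i, (r * x i) * (t * y i)) = r * t * ⟪x, y⟫ := by
    intro r t x y
    simp only [PiLp.inner_apply, RCLike.inner_apply, conj_trivial, Finset.mul_sum]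
    exact Finset.sum_congr rfl fun i _ => by ring
  have hsum2 : ∀ (r : ℝ) (x y : EuclideanSpace ℝ (Fin e)),
      (∑ i, (r * x i) * (y i)) = r * ⟪x, y⟫ := by
    intro r x y
    simp only [PiLp.inner_apply, RCLike.inner_apply, conj_trivial, Finset.mul_sum]
    exact Finset.sum_congr rfl fun i _ => by ring
  have hsum1 : ∀ (x y : EuclideanSpace ℝ (Fin e)), (∑ i, x i * y i) = ⟪x, y⟫ := by
    intro x y
    simp [PiLp.inner_apply, RCLike.inner_apply, mul_comm]
  have iFF : ∀ x y : EuclideanSpace ℝ (Fin e), ⟪F x, F y⟫ = c1 * c1 + c2 * c2 * ⟪x, y⟫ := by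
    intro x y
    simp only [hF]
    rw [hic, hsum]
  have iFG : ∀ x y : EuclideanSpace ℝ (Fin e), ⟪F x, G y⟫ = c2 * ⟪x, y⟫ := by
    intro x y
    simp only [hF, hG]
    rw [hic, hsum2, mul_zero, zero_add]
  have iGG : ∀ x y : EuclideanSpace ℝ (Fin e), ⟪G x, G y⟫ = ⟪x, y⟫ := by
    intro x y
    simp only [hG]
    rw [hic, hsum1, mul_zero, zero_add]
  have hself : ∀ x : EuclideanSpace ℝ (Fin e), ‖x‖ = 1 → ⟪x, x⟫ = 1 := by
    intro x h
    rw [real_inner_self_eq_norm_mul_norm, h, mul_one]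
  -- X₂ closed under negation
  have hX₂neg : ∀ x ∈ X₂, -x ∈ X₂ := by
    intro x hx
    rw [hX₂] at hx
    rcases Finset.mem_image.1 hx with ⟨y, hy, hyx⟩
    rw [← hyx, neg_neg]
    exact hy
  have hxnegne : ∀ x : EuclideanSpace ℝ (Fin e), ‖x‖ = 1 → x ≠ -x := by
    intro x hn h
    have h2 : (2:ℝ) • x = 0 := by
      rw [two_smul]
      nth_rewrite 2 [h]
      simp
    rcases smul_eq_zero.1 h2 with h0 | h0
    · norm_num at h0
    · rw [h0, norm_zero] at hn; norm_num at hn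
  have htrick : ∀ x, x ∈ X₁ → x ∈ X₂ → s * α = 1 := by
    intro x hx1 hx2
    have hmm := hA₁₂ x hx1 (-x) (hX₂neg x hx2) (hxnegne x (hunit₁ x hx1))
    rw [inner_neg_right, hself x (hunit₁ x hx1)] at hmm
    simp only [Set.mem_insert_iff, Set.mem_singleton_iff] at hmm
    rcases hmm with h | h | h
    · norm_num at h
    · nlinarith [mul_nonneg hs0 hα0]
    · linarith
  -- core membership facts
  have hFF : ∀ x ∈ X₁, ∀ y ∈ X₁, x ≠ y → ⟪F x, F y⟫ ∈ ({0, α, -α} : Set ℝ) := by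
    intro x hx y hy hxy
    rw [iFF]
    have h := hA₁ x hx y hy hxy
    simp only [Set.mem_insert_iff, Set.mem_singleton_iff] at h ⊢
    rcases h with h | h | h <;> rw [h, hc1sq, hc2sq]
    · left; field_simp; ring
    · right; left; field_simp; ring
    · right; right; field_simp; ring
  have hFG : ∀ x ∈ X₁, ∀ y ∈ X₂, ⟪F x, G y⟫ ∈ ({0, α, -α} : Set ℝ) := by
    intro x hx y hy
    rw [iFG]
    simp only [Set.mem_insert_iff, Set.mem_singleton_iff]
    by_cases hxy : x = y
    · subst hxy
      rw [hself x (hunit₁ x hx), mul_one]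
      right; left
      calc c2 = c2 * (s * α) := by rw [htrick x hx hy, mul_one]
        _ = (c2 * s) * α := by ring
        _ = α := by rw [hcs, one_mul]
    · have h := hA₁₂ x hx y hy hxy
      simp only [Set.mem_insert_iff, Set.mem_singleton_iff] at h
      rcases h with h | h | h <;> rw [h]
      · left; ring
      · right; left; rw [← mul_assoc, hcs, one_mul]
      · right; right
        rw [show c2 * -(s * α) = -((c2 * s) * α) from by ring, hcs, one_mul]
  have hFnF : ∀ x ∈ X₁, ∀ y ∈ X₁, ⟪F x, -F y⟫ ∈ ({-1, 0, α, -α} : Set ℝ) := by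
    intro x hx y hy
    rw [inner_neg_right, iFF]
    simp only [Set.mem_insert_iff, Set.mem_singleton_iff]
    by_cases hxy : x = y
    · subst hxy
      rw [hself x (hunit₁ x hx), hc1sq, hc2sq]
      left; field_simp; ring
    · have h := hA₁ x hx y hy hxy
      simp only [Set.mem_insert_iff, Set.mem_singleton_iff] at h
      rcases h with h | h | h <;> rw [h, hc1sq, hc2sq]
      · right; left; field_simp; ring
      · right; right; right; field_simp; ring
      · right; right; left; field_simp; ring
  have hsub : ∀ r : ℝ, r ∈ ({0, α, -α} : Set ℝ) → r ∈ ({-1, 0, α, -α} : Set ℝ) := by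
    intro r hr
    simp only [Set.mem_insert_iff, Set.mem_singleton_iff] at hr ⊢
    tauto
  have hnegc : ∀ r : ℝ, r ∈ ({0, α, -α} : Set ℝ) → -r ∈ ({0, α, -α} : Set ℝ) := by
    intro r hr
    simp only [Set.mem_insert_iff, Set.mem_singleton_iff] at hr ⊢
    rcases hr with h | h | h <;> rw [h]
    · left; ring
    · right; right; rfl
    · right; left; rw [neg_neg]
  -- membership characterization of D
  have hmem : ∀ p : EuclideanSpace ℝ (Fin (e + 1)), p ∈ D ↔
      (∃ x ∈ X₁, F x = p) ∨ (∃ x ∈ X₂, G x = p) ∨ (∃ x ∈ X₁, -F x = p) := by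
    intro p
    constructor
    · intro hp
      rw [hD] at hp
      rcases Finset.mem_union.1 hp with hp | hp
      · rcases Finset.mem_union.1 hp with hp | hp
        · exact Or.inl (Finset.mem_image.1 hp)
        · exact Or.inr (Or.inl (Finset.mem_image.1 hp))
      · rcases Finset.mem_image.1 hp with ⟨v, hv, hvp⟩
        rcases Finset.mem_image.1 hv with ⟨x, hx, hxv⟩
        exact Or.inr (Or.inr ⟨x, hx, by rw [hxv, hvp]⟩)
    · intro hp
      rw [hD]
      rcases hp with ⟨x, hx, hxp⟩ | ⟨x, hx, hxp⟩ | ⟨x, hx, hxp⟩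
      · exact Finset.mem_union.2 (Or.inl (Finset.mem_union.2 (Or.inl
          (Finset.mem_image.2 ⟨x, hx, hxp⟩))))
      · exact Finset.mem_union.2 (Or.inl (Finset.mem_union.2 (Or.inr
          (Finset.mem_image.2 ⟨x, hx, hxp⟩))))
      · exact Finset.mem_union.2 (Or.inr (Finset.mem_image.2
          ⟨F x, Finset.mem_image.2 ⟨x, hx, rfl⟩, hxp⟩))
  have hGneg : ∀ x : EuclideanSpace ℝ (Fin e), G (-x) = -(G x) := by
    intro x
    ext i
    refine Fin.cases ?_ (fun j => ?_) i <;> simp [hG]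
  have hFinj : Function.Injective F := by
    intro x y h
    ext i
    have h' : F x i.succ = F y i.succ := by rw [h]
    simp only [hF, Fin.cons_succ] at h'
    exact mul_left_cancel₀ (ne_of_gt hc2pos) h'
  have hGinj : Function.Injective G := by
    intro x y h
    ext i
    have h' : G x i.succ = G y i.succ := by rw [h]
    simpa only [hG, Fin.cons_succ] using h'
  have hF0 : ∀ x : EuclideanSpace ℝ (Fin e), F x 0 = c1 := by
    intro x; simp [hF]
  have hG0 : ∀ x : EuclideanSpace ℝ (Fin e), G x 0 = 0 := by
    intro x; simp [hG]
  refine ⟨?_, ?_, ?_⟩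
  · -- antipodal
    intro p hp
    rw [hmem] at hp ⊢
    rcases hp with ⟨x, hx, hxp⟩ | ⟨x, hx, hxp⟩ | ⟨x, hx, hxp⟩
    · exact Or.inr (Or.inr ⟨x, hx, by rw [hxp]⟩)
    · exact Or.inr (Or.inl ⟨-x, hX₂neg x hx, by rw [hGneg, hxp]⟩)
    · exact Or.inl ⟨x, hx, by rw [← hxp, neg_neg]⟩
  · -- cardinality
    have hdisj1 : Disjoint (X₁.image F) (X₂.image G) := by
      rw [Finset.disjoint_left]
      intro p hpF hpG
      rcases Finset.mem_image.1 hpF with ⟨x, _, hxp⟩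
      rcases Finset.mem_image.1 hpG with ⟨y, _, hyp⟩
      have : c1 = (0:ℝ) := by rw [← hF0 x, ← hG0 y, hxp, hyp]
      exact absurd this (ne_of_gt hc1pos)
    have hdisj2 : Disjoint (X₁.image F ∪ X₂.image G) ((X₁.image F).image fun v => -v) := by
      rw [Finset.disjoint_left]
      intro p hp hpN
      rcases Finset.mem_image.1 hpN with ⟨v, hv, hvp⟩
      rcases Finset.mem_image.1 hv with ⟨x, _, hxv⟩
      have hp0 : p 0 = -c1 := by
        rw [← hvp, ← hxv]
        simp [hF]
      rcases Finset.mem_union.1 hp with hp | hp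
      · rcases Finset.mem_image.1 hp with ⟨y, _, hyp⟩
        rw [← hyp, hF0] at hp0
        linarith
      · rcases Finset.mem_image.1 hp with ⟨y, _, hyp⟩
        rw [← hyp, hG0] at hp0
        linarith
    have hcD : D.card = X₁.card + X₂.card + X₁.card := by
      rw [hD]
      calc (Finset.image F X₁ ∪ Finset.image G X₂ ∪
            Finset.image (fun v => -v) (Finset.image F X₁)).card
          = (Finset.image F X₁ ∪ Finset.image G X₂).card
            + (Finset.image (fun v => -v) (Finset.image F X₁)).card :=
            Finset.card_union_of_disjoint hdisj2
        _ = (Finset.image F X₁).card + (Finset.image G X₂).card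
            + (Finset.image (fun v => -v) (Finset.image F X₁)).card := by
            rw [Finset.card_union_of_disjoint hdisj1]
        _ = X₁.card + X₂.card + X₁.card := by
            rw [Finset.card_image_of_injective _ hFinj, Finset.card_image_of_injective _ hGinj,
              Finset.card_image_of_injective _ neg_injective,
              Finset.card_image_of_injective _ hFinj]
    rw [hcD]
    have key : 3 * d * (X₁.card + X₂.card + X₁.card) = 3 * d * (2 * n) := by
      have h1 : 3 * d * (X₁.card + X₂.card + X₁.card)
          = 3 * d * X₁.card + 3 * d * X₂.card + 3 * d * X₁.card := by ring
      rw [h1, hcard₁, hcard₂]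
      have h6 : (d + 2) + 4 * (d - 1) + (d + 2) = 6 * d := by omega
      calc (d + 2) * n + 4 * (d - 1) * n + (d + 2) * n
          = ((d + 2) + 4 * (d - 1) + (d + 2)) * n := by ring
        _ = 6 * d * n := by rw [h6]
        _ = 3 * d * (2 * n) := by ring
    exact Nat.eq_of_mul_eq_mul_left (by omega) key
  · -- inner products
    intro p hp q hq hpq
    rw [hmem] at hp hq
    rcases hp with ⟨x, hx, rfl⟩ | ⟨x, hx, rfl⟩ | ⟨x, hx, rfl⟩ <;>
      rcases hq with ⟨y, hy, rfl⟩ | ⟨y, hy, rfl⟩ | ⟨y, hy, rfl⟩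
    · -- F F
      refine hsub _ (hFF x hx y hy ?_)
      intro h; exact hpq (by rw [h])
    · -- F G
      exact hsub _ (hFG x hx y hy)
    · -- F (-F)
      exact hFnF x hx y hy
    · -- G F
      rw [real_inner_comm]
      exact hsub _ (hFG y hy x hx)
    · -- G G
      rw [iGG]
      refine hA₂ x hx y hy ?_
      intro h; exact hpq (by rw [h])
    · -- G (-F)
      rw [inner_neg_right, real_inner_comm]
      exact hsub _ (hnegc _ (hFG y hy x hx))
    · -- (-F) F
      rw [real_inner_comm]
      exact hFnF y hy x hx
    · -- (-F) G
      rw [inner_neg_left]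
      exact hsub _ (hnegc _ (hFG x hx y hy))
    · -- (-F) (-F)
      rw [inner_neg_neg]
      refine hsub _ (hFF x hx y hy ?_)
      intro h; exact hpq (by rw [h])
end

section
/- For d > 3 and N = (d+1)(d+2)/6, the numbers a = (−√(d+2)−3)/(d−1) and b = (√(d+2)−3)/(d−1) satisfy: any set of N unit vectors in ℝ^{d-1} whose pairwise inner products all lie in {a,b} and which forms a tight frame (∑xxᵀ = (N/(d−1))I) has ∑_{y≠x}⟨x,y⟩² = N/(d−1) − 1 for each x; moreover (N/(d−1) − 1 − (N−1)b²)/(a² − b²) = (k−1)(k−2)(k²−3)/12 where k = √(d+2). -/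
open scoped RealInnerProductSpace

theorem stmt19 (d : ℕ) (hd : 3 < d) [DecidableEq (EuclideanSpace ℝ (Fin (d - 1)))]
    (X : Finset (EuclideanSpace ℝ (Fin (d - 1))))
    (N : ℝ) (hN : N = ((d : ℝ) + 1) * ((d : ℝ) + 2) / 6)
    (k a b : ℝ) (hk : k = Real.sqrt ((d : ℝ) + 2))
    (ha : a = (-k - 3) / ((d : ℝ) - 1)) (hb : b = (k - 3) / ((d : ℝ) - 1))
    (hcard : (X.card : ℝ) = N)
    (hunit : ∀ x ∈ X, ‖x‖ = 1)
    (hang : ∀ x ∈ X, ∀ y ∈ X, x ≠ y → ⟪x, y⟫ = a ∨ ⟪x, y⟫ = b)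
    (htf : ∀ v : EuclideanSpace ℝ (Fin (d - 1)),
      ∑ y ∈ X, ⟪v, y⟫ ^ 2 = (N / ((d : ℝ) - 1)) * ⟪v, v⟫) :
    (∀ x ∈ X, ∑ y ∈ X.erase x, ⟪x, y⟫ ^ 2 = N / ((d : ℝ) - 1) - 1) ∧
    (N / ((d : ℝ) - 1) - 1 - (N - 1) * b ^ 2) / (a ^ 2 - b ^ 2)
      = (k - 1) * (k - 2) * (k ^ 2 - 3) / 12 := by
  have hD : (4:ℝ) ≤ (d:ℝ) := by exact_mod_cast hd
  have hk2 : k ^ 2 = (d:ℝ) + 2 := by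
    rw [hk]; exact Real.sq_sqrt (by linarith)
  have hkpos : 0 < k := by
    rw [hk]; exact Real.sqrt_pos.mpr (by linarith)
  have hd1 : (d:ℝ) - 1 ≠ 0 := by linarith
  constructor
  · intro x hx
    have hxx : ⟪x, x⟫ = 1 := by
      rw [real_inner_self_eq_norm_sq, hunit x hx]; norm_num
    have h := htf x
    rw [← Finset.add_sum_erase _ _ hx, hxx] at h
    linarith
  · have hab : a ^ 2 - b ^ 2 = 12 * k / ((d:ℝ) - 1) ^ 2 := by
      rw [ha, hb]; field_simp; ring
    have hk3 : k ^ 2 - 3 ≠ 0 := by nlinarith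
    have hk0 : k ≠ 0 := ne_of_gt hkpos
    have hdk : (d:ℝ) = k ^ 2 - 2 := by linarith
    have hne : 12 * k / ((d:ℝ) - 1) ^ 2 ≠ 0 := by
      apply div_ne_zero (by positivity)
      rw [hdk]; intro h; apply hk3; nlinarith [sq_nonneg (k^2-3)]
    rw [hab, div_eq_iff hne, hN, hb, hdk]
    have h3 : k ^ 2 - 2 - 1 ≠ 0 := by rw [show k^2-2-1 = k^2-3 by ring]; exact hk3
    field_simp
    ring
end
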